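/- Let X be a complete separable metric space, κ a Markov transition probability kernel on X with the Feller property (for every bounded continuous φ, the function Pφ(x) = ∫_X φ(y) dκ(x)(y) is bounded continuous), and let μ be a Borel probability measure on X. Let ℙ_μ be the law on the path space X^ℕ of the Markov chain (Φ_n)_{n≥0} with initial distribution μ and transition kernel κ (the coordinate process under the Ionescu–Tulcea measure). Then for every bounded continuous φ : X → ℝ, ℙ_μ-almost surely (1/n) Σ_{k=0}^{n-1} (Pφ(Φ_k) − φ(Φ_k)) → 0 as n → ∞. -/

import Mathlib

open MeasureTheory Filter

open scoped ENNReal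

lemma aux_integrable_of_bounded {Ω : Type*} [MeasurableSpace Ω] {ℙ : Measure Ω}
    [IsFiniteMeasure ℙ] {f : Ω → ℝ} (hf : Measurable f) {B : ℝ} (hB : ∀ ω, |f ω| ≤ B) :
    Integrable f ℙ :=
  ⟨hf.aestronglyMeasurable,
    HasFiniteIntegral.of_bounded (C := B) (ae_of_all _ fun ω => by
      simpa [Real.norm_eq_abs] using hB ω)⟩

/-- SLLN for bounded pairwise-orthogonal sequences: a.s. convergence along squares. -/
lemma aux_slln_sq {Ω : Type*} [MeasurableSpace Ω] (ℙ : Measure Ω) [IsProbabilityMeasure ℙ]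
    (d : ℕ → Ω → ℝ) (hmeas : ∀ k, Measurable (d k)) {C : ℝ} (hC : 0 ≤ C)
    (hbd : ∀ k ω, |d k ω| ≤ C)
    (horth : ∀ j k, j < k → ∫ ω, d j ω * d k ω ∂ℙ = 0) :
    ∀ᵐ ω ∂ℙ, Tendsto
      (fun n : ℕ => |∑ k ∈ Finset.range ((n + 1) ^ 2), d k ω| / ((n + 1 : ℕ) ^ 2 : ℝ))
      atTop (nhds 0) := by
  set S : ℕ → Ω → ℝ := fun n ω => ∑ k ∈ Finset.range n, d k ω with hSdef
  have hSmeas : ∀ n, Measurable (S n) := fun n => Finset.measurable_sum _ fun k _ => hmeas k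
  have hSbd : ∀ n ω, |S n ω| ≤ n * C := by
    intro n ω
    calc |S n ω| ≤ ∑ k ∈ Finset.range n, |d k ω| := Finset.abs_sum_le_sum_abs _ _
      _ ≤ ∑ _k ∈ Finset.range n, C := Finset.sum_le_sum fun k _ => hbd k ω
      _ = n * C := by simp [mul_comm]
  have hint : ∀ j k, Integrable (fun ω => d j ω * d k ω) ℙ := fun j k =>
    aux_integrable_of_bounded ((hmeas j).mul (hmeas k)) (B := C * C)
      (fun ω => by rw [abs_mul]; exact mul_le_mul (hbd j ω) (hbd k ω) (abs_nonneg _) hC)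
  -- second moment bound
  have hmom : ∀ n : ℕ, ∫ ω, (S n ω) ^ 2 ∂ℙ ≤ n * C ^ 2 := by
    intro n
    have hexp : ∀ ω, (S n ω) ^ 2
        = ∑ j ∈ Finset.range n, ∑ k ∈ Finset.range n, d j ω * d k ω := by
      intro ω; rw [pow_two, hSdef]; exact Finset.sum_mul_sum _ _ _ _
    have : ∫ ω, (S n ω) ^ 2 ∂ℙ
        = ∑ j ∈ Finset.range n, ∑ k ∈ Finset.range n, ∫ ω, d j ω * d k ω ∂ℙ := by
      rw [show (fun ω => (S n ω) ^ 2)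
          = fun ω => ∑ j ∈ Finset.range n, ∑ k ∈ Finset.range n, d j ω * d k ω
          from funext hexp]
      rw [integral_finset_sum _ fun j _ => integrable_finset_sum _ fun k _ => hint j k]
      exact Finset.sum_congr rfl fun j _ => integral_finset_sum _ fun k _ => hint j k
    rw [this]
    have hdiag : ∀ j ∈ Finset.range n,
        ∑ k ∈ Finset.range n, ∫ ω, d j ω * d k ω ∂ℙ = ∫ ω, d j ω * d j ω ∂ℙ := by
      intro j hj
      refine Finset.sum_eq_single j (fun k _ hkj => ?_) (fun hjn => absurd hj hjn)
      rcases lt_or_gt_of_ne hkj with hlt | hgt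
      · rw [show (fun ω => d j ω * d k ω) = fun ω => d k ω * d j ω from
          funext fun ω => mul_comm _ _]
        exact horth k j hlt
      · exact horth j k hgt
    rw [Finset.sum_congr rfl hdiag]
    have hone : ∀ j, ∫ ω, d j ω * d j ω ∂ℙ ≤ C ^ 2 := by
      intro j
      have : ∫ ω, d j ω * d j ω ∂ℙ ≤ ∫ _ω, C ^ 2 ∂ℙ := by
        refine integral_mono (hint j j) (integrable_const _) fun ω => ?_
        rw [← pow_two]
        calc d j ω ^ 2 = |d j ω| ^ 2 := (sq_abs _).symm
          _ ≤ C ^ 2 := by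
              have := hbd j ω
              nlinarith [abs_nonneg (d j ω)]
      simpa using this
    calc ∑ j ∈ Finset.range n, ∫ ω, d j ω * d j ω ∂ℙ
        ≤ ∑ _j ∈ Finset.range n, C ^ 2 := Finset.sum_le_sum fun j _ => hone j
      _ = n * C ^ 2 := by simp [mul_comm]
  -- the ENNReal-valued series
  set N : ℕ → ℕ := fun n => (n + 1) ^ 2 with hNdef
  set f : ℕ → Ω → ℝ≥0∞ := fun n ω =>
    ENNReal.ofReal ((S (N n) ω / (N n : ℝ)) ^ 2) with hfdef
  have hfmeas : ∀ n, Measurable (f n) := fun n =>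
    (ENNReal.measurable_ofReal.comp (((hSmeas _).div_const _).pow_const 2))
  have hfint : ∀ n : ℕ, ∫⁻ ω, f n ω ∂ℙ ≤ ENNReal.ofReal (C ^ 2 / (N n : ℝ)) := by
    intro n
    have hNpos : (0 : ℝ) < (N n : ℝ) := by
      have : 0 < N n := by simp [hNdef]
      exact_mod_cast this
    have hintS2 : Integrable (fun ω => (S (N n) ω / (N n : ℝ)) ^ 2) ℙ := by
      refine aux_integrable_of_bounded (((hSmeas (N n)).div_const _).pow_const 2)
        (B := ((N n : ℝ) * C / (N n : ℝ)) ^ 2) fun ω => ?_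
      rw [abs_of_nonneg (sq_nonneg _)]
      have h1 : |S (N n) ω / (N n : ℝ)| ≤ (N n : ℝ) * C / (N n : ℝ) := by
        rw [abs_div, abs_of_nonneg hNpos.le]
        gcongr
        exact hSbd (N n) ω
      calc (S (N n) ω / (N n : ℝ)) ^ 2 = |S (N n) ω / (N n : ℝ)| ^ 2 := (sq_abs _).symm
        _ ≤ ((N n : ℝ) * C / (N n : ℝ)) ^ 2 := by
            nlinarith [abs_nonneg (S (N n) ω / (N n : ℝ))]
    have hfeq : (fun ω => f n ω) = fun ω => ENNReal.ofReal ((S (N n) ω / (N n : ℝ)) ^ 2) := rfl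
    rw [show ∫⁻ ω, f n ω ∂ℙ = ∫⁻ ω, ENNReal.ofReal ((S (N n) ω / (N n : ℝ)) ^ 2) ∂ℙ from rfl]
    rw [← ofReal_integral_eq_lintegral_ofReal hintS2 (ae_of_all _ fun ω => sq_nonneg _)]
    refine ENNReal.ofReal_le_ofReal ?_
    have : ∫ ω, (S (N n) ω / (N n : ℝ)) ^ 2 ∂ℙ = (∫ ω, (S (N n) ω) ^ 2 ∂ℙ) / ((N n : ℝ) ^ 2) := by
      rw [← integral_div]
      congr 1; funext ω; rw [div_pow]
    rw [this]
    have h2 : (∫ ω, (S (N n) ω) ^ 2 ∂ℙ) / ((N n : ℝ) ^ 2) ≤ ((N n : ℝ) * C ^ 2) / ((N n : ℝ) ^ 2) := by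
      gcongr
      exact hmom (N n)
    refine h2.trans (le_of_eq ?_)
    field_simp
  -- summability
  have hsum : ∑' n, ∫⁻ ω, f n ω ∂ℙ ≠ ⊤ := by
    have hsummable : Summable (fun n : ℕ => C ^ 2 / ((N n : ℝ))) := by
      have h1 : Summable (fun n : ℕ => 1 / ((n : ℝ)) ^ 2) :=
        Real.summable_one_div_nat_pow.mpr one_lt_two
      have h2 : Summable (fun n : ℕ => 1 / (((n + 1 : ℕ) : ℝ)) ^ 2) := by
        exact_mod_cast (summable_nat_add_iff 1).mpr h1
      have := h2.mul_left (C ^ 2)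
      refine this.congr fun n => ?_
      simp only [hNdef]
      push_cast
      ring
    refine ne_top_of_le_ne_top ?_ (ENNReal.tsum_le_tsum hfint)
    rw [← ENNReal.ofReal_tsum_of_nonneg (fun n => by positivity) hsummable]
    exact ENNReal.ofReal_ne_top
  have hae : ∀ᵐ ω ∂ℙ, ∑' n, f n ω < ⊤ := by
    refine ae_lt_top (by exact Measurable.ennreal_tsum hfmeas) ?_
    rw [lintegral_tsum fun n => (hfmeas n).aemeasurable]
    exact hsum
  filter_upwards [hae] with ω hω
  have hsummable : Summable (fun n => ((f n ω).toReal)) := ENNReal.summable_toReal hω.ne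
  have heq : ∀ n, (f n ω).toReal = (S (N n) ω / (N n : ℝ)) ^ 2 := fun n =>
    ENNReal.toReal_ofReal (sq_nonneg _)
  have htend : Tendsto (fun n => (S (N n) ω / (N n : ℝ)) ^ 2)
      atTop (nhds 0) := by
    have := hsummable.tendsto_atTop_zero
    exact this.congr heq
  have := (Real.continuous_sqrt.tendsto 0).comp htend
  rw [Real.sqrt_zero] at this
  refine this.congr fun n => ?_
  simp only [Function.comp_apply, Real.sqrt_sq_eq_abs, abs_div, hNdef, hSdef]
  rw [abs_of_nonneg (by positivity : (0:ℝ) ≤ (((n+1)^2 : ℕ) : ℝ))]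
  push_cast
  ring

/-- Deterministic gap-filling: if the Cesàro sums of a `C`-bounded sequence converge to 0
along squares, they converge to 0. -/
lemma aux_gap {d : ℕ → ℝ} {C : ℝ} (hC : 0 ≤ C) (hbd : ∀ k, |d k| ≤ C)
    (h : Tendsto (fun n : ℕ => |∑ k ∈ Finset.range ((n + 1) ^ 2), d k| / ((n + 1 : ℕ) ^ 2 : ℝ))
      atTop (nhds 0)) :
    Tendsto (fun n : ℕ => (n : ℝ)⁻¹ * ∑ k ∈ Finset.range n, d k) atTop (nhds 0) := by
  set S : ℕ → ℝ := fun n => ∑ k ∈ Finset.range n, d k with hS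
  have h' : Tendsto (fun r : ℕ => |S (r ^ 2)| / ((r : ℝ) ^ 2)) atTop (nhds 0) := by
    rw [← tendsto_add_atTop_iff_nat 1]
    exact h.congr (fun n => by simp only [hS])
  have hsqrt : Tendsto Nat.sqrt atTop atTop := by
    refine tendsto_atTop_atTop.mpr fun b => ⟨b * b, fun m hm => Nat.le_sqrt.mpr hm⟩
  -- the bounding sequence
  have hb : Tendsto (fun m : ℕ => |S (Nat.sqrt m ^ 2)| / ((Nat.sqrt m : ℝ) ^ 2)
      + 2 * C / (Nat.sqrt m : ℝ)) atTop (nhds 0) := by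
    have h2 : Tendsto (fun r : ℕ => |S (r ^ 2)| / ((r : ℝ) ^ 2) + 2 * C / (r : ℝ))
        atTop (nhds 0) := by
      simpa using h'.add (tendsto_const_div_atTop_nhds_zero_nat (2 * C))
    exact h2.comp hsqrt
  rw [tendsto_zero_iff_abs_tendsto_zero]
  refine squeeze_zero' (Eventually.of_forall fun m => abs_nonneg _) ?_ hb
  filter_upwards [eventually_ge_atTop 1] with m hm
  set r := Nat.sqrt m with hr
  have hr1 : 1 ≤ r := Nat.le_sqrt.mpr (by simpa using hm)
  have hrm : r ^ 2 ≤ m := by simpa [pow_two] using Nat.sqrt_le m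
  have hmr : m ≤ r ^ 2 + 2 * r := by
    have := Nat.lt_succ_sqrt m
    nlinarith [Nat.lt_succ_sqrt m]
  have hrR : (1 : ℝ) ≤ (r : ℝ) := by exact_mod_cast hr1
  have hrpos : (0 : ℝ) < (r : ℝ) ^ 2 := by positivity
  -- |S m| ≤ |S r²| + 2rC
  have hdiff : |S m| ≤ |S (r ^ 2)| + 2 * (r : ℝ) * C := by
    have hsum : S m - S (r ^ 2) = ∑ k ∈ Finset.Ico (r ^ 2) m, d k :=
      (Finset.sum_Ico_eq_sub d hrm).symm
    have hcard : ((m - r ^ 2 : ℕ) : ℝ) ≤ 2 * (r : ℝ) := by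
      have : m - r ^ 2 ≤ 2 * r := by omega
      exact_mod_cast this
    have habs : |S m - S (r ^ 2)| ≤ 2 * (r : ℝ) * C := by
      rw [hsum]
      calc |∑ k ∈ Finset.Ico (r ^ 2) m, d k| ≤ ∑ k ∈ Finset.Ico (r ^ 2) m, |d k| :=
            Finset.abs_sum_le_sum_abs _ _
        _ ≤ ∑ _k ∈ Finset.Ico (r ^ 2) m, C := Finset.sum_le_sum fun k _ => hbd k
        _ = ((m - r ^ 2 : ℕ) : ℝ) * C := by simp [Nat.card_Ico]
        _ ≤ 2 * (r : ℝ) * C := by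
            exact mul_le_mul_of_nonneg_right hcard hC
    calc |S m| = |S (r ^ 2) + (S m - S (r ^ 2))| := by ring_nf
      _ ≤ |S (r ^ 2)| + |S m - S (r ^ 2)| := abs_add_le _ _
      _ ≤ |S (r ^ 2)| + 2 * (r : ℝ) * C := by linarith
  have hmpos : (0 : ℝ) < (m : ℝ) := by exact_mod_cast hm
  have hmm : ((r : ℝ)) ^ 2 ≤ (m : ℝ) := by exact_mod_cast hrm
  calc |(m : ℝ)⁻¹ * S m| = |S m| / (m : ℝ) := by
        rw [abs_mul, abs_inv, abs_of_nonneg hmpos.le, inv_mul_eq_div]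
    _ ≤ (|S (r ^ 2)| + 2 * (r : ℝ) * C) / ((r : ℝ) ^ 2) :=
        div_le_div₀ (by positivity) hdiff hrpos hmm
    _ = |S (r ^ 2)| / ((r : ℝ) ^ 2) + 2 * C / (r : ℝ) := by
        field_simp

/-- Furstenberg's lemma: for a Feller Markov chain, the Cesàro averages of
`Pφ(Φ_k) − φ(Φ_k)` go to zero almost surely. -/
theorem stmt_7
    {X : Type*} [MetricSpace X] [CompleteSpace X]
    [TopologicalSpace.SeparableSpace X]
    [MeasurableSpace X] [BorelSpace X]
    (κ : X → Measure X) (hκp : ∀ x, IsProbabilityMeasure (κ x))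
    (hκm : ∀ A : Set X, MeasurableSet A → Measurable fun x => κ x A)
    (hFeller : ∀ φ : X → ℝ, Continuous φ → (∃ M, ∀ x, |φ x| ≤ M) →
      Continuous (fun x => ∫ y, φ y ∂ κ x) ∧ ∃ M, ∀ x, |∫ y, φ y ∂ κ x| ≤ M)
    (μ : Measure X) [IsProbabilityMeasure μ]
    (ℙ : Measure (ℕ → X)) [IsProbabilityMeasure ℙ]
    (h0 : Measure.map (fun ω => ω 0) ℙ = μ)
    (hMarkov : ∀ n : ℕ, ∀ g : X → ℝ, Measurable g → (∃ M, ∀ x, |g x| ≤ M) →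
      ∀ h : (Fin (n + 1) → X) → ℝ, Measurable h → (∃ M, ∀ v, |h v| ≤ M) →
      ∫ ω, h (fun i => ω i.1) * g (ω (n + 1)) ∂ℙ
        = ∫ ω, h (fun i => ω i.1) * (∫ y, g y ∂ κ (ω n)) ∂ℙ) :
    ∀ φ : X → ℝ, Continuous φ → (∃ M, ∀ x, |φ x| ≤ M) →
      ∀ᵐ ω ∂ℙ, Tendsto
        (fun n : ℕ => (n : ℝ)⁻¹ * ∑ k ∈ Finset.range n, ((∫ y, φ y ∂ κ (ω k)) - φ (ω k)))
        atTop (nhds 0) := by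
  intro φ hφc hφb
  obtain ⟨M, hM⟩ := hφb
  obtain ⟨hPc, M₂, hM₂⟩ := hFeller φ hφc ⟨M, hM⟩
  set Pφ : X → ℝ := fun x => ∫ y, φ y ∂κ x with hPφ
  -- nonemptiness, to get nonnegativity of the bounds
  have hΩ : (Set.univ : Set (ℕ → X)).Nonempty := by
    refine nonempty_of_measure_ne_zero (μ := ℙ) ?_
    simp
  obtain ⟨ω₀, -⟩ := hΩ
  have hM0 : 0 ≤ M := le_trans (abs_nonneg _) (hM (ω₀ 0))
  have hM20 : 0 ≤ M₂ := le_trans (abs_nonneg _) (hM₂ (ω₀ 0))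
  have hC : (0 : ℝ) ≤ M + M₂ := by linarith
  -- the martingale differences
  set d : ℕ → (ℕ → X) → ℝ := fun k ω => φ (ω (k + 1)) - Pφ (ω k) with hd
  have hdmeas : ∀ k, Measurable (d k) := fun k =>
    (hφc.measurable.comp (measurable_pi_apply (k + 1))).sub
      (hPc.measurable.comp (measurable_pi_apply k))
  have hdbd : ∀ k ω, |d k ω| ≤ M + M₂ := fun k ω =>
    (abs_sub _ _).trans (add_le_add (hM _) (hM₂ _))
  -- orthogonality via the Markov property
  have horth : ∀ j k, j < k → ∫ ω, d j ω * d k ω ∂ℙ = 0 := by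
    intro j k hjk
    have hj1 : j + 1 < k + 1 := by omega
    have hjk1 : j < k + 1 := by omega
    set h : (Fin (k + 1) → X) → ℝ :=
      fun v => φ (v ⟨j + 1, hj1⟩) - Pφ (v ⟨j, hjk1⟩) with hh
    have hhm : Measurable h :=
      (hφc.measurable.comp (measurable_pi_apply _)).sub
        (hPc.measurable.comp (measurable_pi_apply _))
    have hhb : ∀ v, |h v| ≤ M + M₂ := fun v =>
      (abs_sub _ _).trans (add_le_add (hM _) (hM₂ _))
    have key := hMarkov k φ hφc.measurable ⟨M, hM⟩ h hhm ⟨M + M₂, hhb⟩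
    have key' : ∫ ω, d j ω * φ (ω (k + 1)) ∂ℙ = ∫ ω, d j ω * Pφ (ω k) ∂ℙ := key
    have hia : Integrable (fun ω => d j ω * φ (ω (k + 1))) ℙ :=
      aux_integrable_of_bounded
        ((hdmeas j).mul (hφc.measurable.comp (measurable_pi_apply _)))
        (B := (M + M₂) * M) fun ω => by
          rw [abs_mul]
          exact mul_le_mul (hdbd j ω) (hM _) (abs_nonneg _) hC
    have hib : Integrable (fun ω => d j ω * Pφ (ω k)) ℙ :=
      aux_integrable_of_bounded
        ((hdmeas j).mul (hPc.measurable.comp (measurable_pi_apply _)))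
        (B := (M + M₂) * M₂) fun ω => by
          rw [abs_mul]
          exact mul_le_mul (hdbd j ω) (hM₂ _) (abs_nonneg _) hC
    calc ∫ ω, d j ω * d k ω ∂ℙ
        = ∫ ω, (d j ω * φ (ω (k + 1)) - d j ω * Pφ (ω k)) ∂ℙ := by
          congr 1; funext ω; rw [hd]; ring
      _ = (∫ ω, d j ω * φ (ω (k + 1)) ∂ℙ) - ∫ ω, d j ω * Pφ (ω k) ∂ℙ :=
          integral_sub hia hib
      _ = 0 := by rw [key']; ring
  have hae := aux_slln_sq ℙ d hdmeas hC hdbd horth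
  filter_upwards [hae] with ω hω
  have htends : Tendsto (fun n : ℕ => (n : ℝ)⁻¹ * ∑ k ∈ Finset.range n, d k ω)
      atTop (nhds 0) := aux_gap hC (fun k => hdbd k ω) hω
  -- telescoping identity
  have hkey : ∀ n : ℕ, ∑ k ∈ Finset.range n, (Pφ (ω k) - φ (ω k))
      = -(∑ k ∈ Finset.range n, d k ω) + (φ (ω n) - φ (ω 0)) := by
    intro n
    have ht : ∑ k ∈ Finset.range n, (φ (ω (k + 1)) - φ (ω k)) = φ (ω n) - φ (ω 0) :=
      Finset.sum_range_sub (fun k => φ (ω k)) n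
    have hsplit : ∑ k ∈ Finset.range n, (Pφ (ω k) - φ (ω k))
        + ∑ k ∈ Finset.range n, d k ω
        = ∑ k ∈ Finset.range n, (φ (ω (k + 1)) - φ (ω k)) := by
      rw [← Finset.sum_add_distrib]
      refine Finset.sum_congr rfl fun k _ => ?_
      rw [hd]; ring
    rw [ht] at hsplit
    linarith
  have h2 : Tendsto (fun n : ℕ => (n : ℝ)⁻¹ * (φ (ω n) - φ (ω 0))) atTop (nhds 0) := by
    refine squeeze_zero_norm (fun n => ?_) (tendsto_const_div_atTop_nhds_zero_nat (M + M))
    calc ‖(n : ℝ)⁻¹ * (φ (ω n) - φ (ω 0))‖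
        = (n : ℝ)⁻¹ * |φ (ω n) - φ (ω 0)| := by
          rw [Real.norm_eq_abs, abs_mul, abs_inv, Nat.abs_cast]
      _ ≤ (n : ℝ)⁻¹ * (M + M) :=
          mul_le_mul_of_nonneg_left
            ((abs_sub _ _).trans (add_le_add (hM _) (hM _))) (by positivity)
      _ = (M + M) / (n : ℝ) := by rw [inv_mul_eq_div]
  have hfinal : Tendsto (fun n : ℕ =>
      -((n : ℝ)⁻¹ * ∑ k ∈ Finset.range n, d k ω)
        + (n : ℝ)⁻¹ * (φ (ω n) - φ (ω 0))) atTop (nhds 0) := by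
    simpa using htends.neg.add h2
  refine hfinal.congr fun n => ?_
  rw [hkey n]
  ring
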